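/- (Proposition 2, nonexpansivity.) Fix positive integers M, N, R, V ∈ ℝ^{M×N}, and H ∈ ℝ^{R×N}. Let λ ≥ 0 satisfy λ ≤ 2/‖HᵀH‖_F in case H ≠ O (and λ ≥ 0 arbitrary in case H = O). Define S_{H,λ}(W) := P₊[W − λ (WH − V)Hᵀ] for W ∈ ℝ^{M×R}. Then S_{H,λ} is nonexpansive: ‖S_{H,λ}(W₁) − S_{H,λ}(W₂)‖_F ≤ ‖W₁ − W₂‖_F for all W₁, W₂ ∈ ℝ^{M×R}. -/
import Mathlib


open Matrix

/-- Frobenius norm of a real matrix. -/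
noncomputable def frob {m n : Type*} [Fintype m] [Fintype n] (X : Matrix m n ℝ) : ℝ :=
  Real.sqrt (∑ i, ∑ j, (X i j) ^ 2)

/-- Entrywise projection onto the nonnegative orthant. -/
def pplus {m n : Type*} (X : Matrix m n ℝ) : Matrix m n ℝ :=
  Matrix.of fun i j => max (X i j) 0

noncomputable def Sq {m n : Type*} [Fintype m] [Fintype n] (X : Matrix m n ℝ) : ℝ :=
  ∑ i, ∑ j, (X i j) ^ 2

noncomputable def ip {m n : Type*} [Fintype m] [Fintype n] (X Y : Matrix m n ℝ) : ℝ :=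
  ∑ i, ∑ j, X i j * Y i j

lemma Sq_nonneg {m n : Type*} [Fintype m] [Fintype n] (X : Matrix m n ℝ) : 0 ≤ Sq X := by
  refine Finset.sum_nonneg fun i _ => Finset.sum_nonneg fun j _ => sq_nonneg _

lemma frob_eq {m n : Type*} [Fintype m] [Fintype n] (X : Matrix m n ℝ) :
    frob X = Real.sqrt (Sq X) := rfl

lemma frob_nonneg {m n : Type*} [Fintype m] [Fintype n] (X : Matrix m n ℝ) : 0 ≤ frob X :=
  Real.sqrt_nonneg _

lemma frob_mul_self {m n : Type*} [Fintype m] [Fintype n] (X : Matrix m n ℝ) :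
    frob X * frob X = Sq X := Real.mul_self_sqrt (Sq_nonneg X)

lemma ip_self {m n : Type*} [Fintype m] [Fintype n] (X : Matrix m n ℝ) : ip X X = Sq X := by
  simp [ip, Sq, pow_two]

/-- Cauchy–Schwarz. -/
lemma ip_le {m n : Type*} [Fintype m] [Fintype n] (X Y : Matrix m n ℝ) :
    ip X Y ≤ frob X * frob Y := by
  have h := Real.sum_mul_le_sqrt_mul_sqrt (Finset.univ : Finset (m × n))
    (fun p => X p.1 p.2) (fun p => Y p.1 p.2)
  simp only [Fintype.sum_prod_type] at h
  simpa [ip, frob, Sq] using h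

/-- Submultiplicativity of squared Frobenius norm. -/
lemma Sq_mul_le {m n r : Type*} [Fintype m] [Fintype n] [Fintype r]
    (X : Matrix m n ℝ) (Y : Matrix n r ℝ) : Sq (X * Y) ≤ Sq X * Sq Y := by
  have h : ∀ i j, ((X * Y) i j) ^ 2 ≤ (∑ k, X i k ^ 2) * (∑ k, Y k j ^ 2) := by
    intro i j
    have := Finset.sum_mul_sq_le_sq_mul_sq Finset.univ (fun k => X i k) (fun k => Y k j)
    simpa [Matrix.mul_apply] using this
  calc Sq (X * Y) ≤ ∑ i, ∑ j, (∑ k, X i k ^ 2) * (∑ k, Y k j ^ 2) := by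
        refine Finset.sum_le_sum fun i _ => Finset.sum_le_sum fun j _ => h i j
    _ = (∑ i, ∑ k, X i k ^ 2) * (∑ j, ∑ k, Y k j ^ 2) := by
        rw [← Finset.sum_mul_sum]
    _ = Sq X * Sq Y := by
        rw [Sq, Sq, Finset.sum_comm (f := fun (j : r) (k : n) => Y k j ^ 2)]

lemma frob_mul_le {m n r : Type*} [Fintype m] [Fintype n] [Fintype r]
    (X : Matrix m n ℝ) (Y : Matrix n r ℝ) : frob (X * Y) ≤ frob X * frob Y := by
  rw [frob_eq, frob_eq, frob_eq, ← Real.sqrt_mul (Sq_nonneg X)]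
  exact Real.sqrt_le_sqrt (Sq_mul_le X Y)

/-- adjoint identity -/
lemma ip_mul_transpose {m n r : Type*} [Fintype m] [Fintype n] [Fintype r]
    (X : Matrix m n ℝ) (Y : Matrix m r ℝ) (Z : Matrix n r ℝ) :
    ip X (Y * Zᵀ) = ip (X * Z) Y := by
  simp only [ip, Matrix.mul_apply, Matrix.transpose_apply, Finset.mul_sum, Finset.sum_mul]
  rw [Finset.sum_congr rfl fun i _ => Finset.sum_comm]
  congr 1; ext i; congr 1; ext k; congr 1; ext j; ring

lemma ip_comm {m n : Type*} [Fintype m] [Fintype n] (X Y : Matrix m n ℝ) : ip X Y = ip Y X := by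
  simp [ip, mul_comm]

lemma Sq_expand {m n : Type*} [Fintype m] [Fintype n] (X Y : Matrix m n ℝ) (lam : ℝ) :
    Sq (X - lam • Y) = Sq X - 2 * lam * ip X Y + lam ^ 2 * Sq Y := by
  simp only [Sq, ip, Matrix.sub_apply, Matrix.smul_apply, smul_eq_mul, Finset.mul_sum,
    ← Finset.sum_add_distrib, ← Finset.sum_sub_distrib]
  refine Finset.sum_congr rfl fun i _ => Finset.sum_congr rfl fun j _ => by ring

lemma Sq_pplus_le {m n : Type*} [Fintype m] [Fintype n] (A B : Matrix m n ℝ) :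
    Sq (pplus A - pplus B) ≤ Sq (A - B) := by
  refine Finset.sum_le_sum fun i _ => Finset.sum_le_sum fun j _ => ?_
  have h : |max (A i j) 0 - max (B i j) 0| ≤ |A i j - B i j| := abs_max_sub_max_le_abs _ _ _
  have := mul_self_le_mul_self (abs_nonneg _) h
  simpa [pplus, Matrix.sub_apply, ← pow_two, sq_abs] using this

theorem stmt_6 (M N R : ℕ) (hM : 0 < M) (hN : 0 < N) (hR : 0 < R)
    (V : Matrix (Fin M) (Fin N) ℝ) (H : Matrix (Fin R) (Fin N) ℝ)
    (lam : ℝ) (hlam0 : 0 ≤ lam) (hlam : H ≠ 0 → lam ≤ 2 / frob (Hᵀ * H))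
    (W₁ W₂ : Matrix (Fin M) (Fin R) ℝ) :
    frob (pplus (W₁ - lam • ((W₁ * H - V) * Hᵀ)) - pplus (W₂ - lam • ((W₂ * H - V) * Hᵀ))) ≤
      frob (W₁ - W₂) := by
  set D := W₁ - W₂ with hD
  have key : (W₁ - lam • ((W₁ * H - V) * Hᵀ)) - (W₂ - lam • ((W₂ * H - V) * Hᵀ))
      = D - lam • (D * H * Hᵀ) := by
    have : (W₁ * H - V) * Hᵀ - (W₂ * H - V) * Hᵀ = D * H * Hᵀ := by
      rw [← Matrix.sub_mul]
      congr 1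
      rw [hD, Matrix.sub_mul]
      abel
    set P1 := (W₁ * H - V) * Hᵀ
    set P2 := (W₂ * H - V) * Hᵀ
    rw [← this, smul_sub, hD]
    abel
  refine le_trans (Real.sqrt_le_sqrt (Sq_pplus_le _ _)) ?_
  rw [key, frob_eq]
  refine Real.sqrt_le_sqrt ?_
  -- main inequality: Sq (D - lam • (D*H*Hᵀ)) ≤ Sq D
  by_cases hH : H = 0
  · simp [hH, Sq]
  -- c := frob (Hᵀ * H) > 0
  have hcpos : 0 < frob (Hᵀ * H) := by
    obtain ⟨i, j, hij⟩ : ∃ i j, H i j ≠ 0 := by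
      by_contra h
      push_neg at h
      exact hH (by ext i j; simp [h i j])
    have hdiag : 0 < (Hᵀ * H) j j := by
      rw [Matrix.mul_apply]
      refine Finset.sum_pos' (fun k _ => by simp [Matrix.transpose_apply, mul_self_nonneg]) ?_
      exact ⟨i, Finset.mem_univ i, by simp [Matrix.transpose_apply]; positivity⟩
    have hSqpos : 0 < Sq (Hᵀ * H) := by
      have : (0:ℝ) < ((Hᵀ * H) j j) ^ 2 := by positivity
      calc (0:ℝ) < ((Hᵀ * H) j j) ^ 2 := this
        _ ≤ ∑ j', ((Hᵀ * H) j j') ^ 2 :=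
            Finset.single_le_sum (f := fun j' => ((Hᵀ * H) j j') ^ 2)
              (fun k _ => sq_nonneg _) (Finset.mem_univ j)
        _ ≤ Sq (Hᵀ * H) :=
            Finset.single_le_sum (f := fun i' => ∑ j', ((Hᵀ * H) i' j') ^ 2)
              (fun k _ => Finset.sum_nonneg fun _ _ => sq_nonneg _) (Finset.mem_univ j)
    exact Real.sqrt_pos.mpr hSqpos
  set c := frob (Hᵀ * H) with hc
  have hlc : lam * c ≤ 2 := by
    have := hlam hH
    rw [div_eq_mul_inv] at this
    calc lam * c ≤ (2 * c⁻¹) * c := by nlinarith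
      _ = 2 := by field_simp
  set G := D * H with hG
  have h1 : ip D (D * H * Hᵀ) = Sq G := by
    rw [ip_mul_transpose D G H, ← hG, ip_self]
  have h2 : Sq (G * Hᵀ) ≤ c * Sq G := by
    have e1 : Sq (G * Hᵀ) = ip (G * (Hᵀ * H)) G := by
      rw [← ip_self, ip_mul_transpose (G * Hᵀ) G H, Matrix.mul_assoc]
    have e2 : ip (G * (Hᵀ * H)) G ≤ frob (G * (Hᵀ * H)) * frob G := ip_le _ _
    have e3 : frob (G * (Hᵀ * H)) ≤ frob G * c := frob_mul_le G (Hᵀ * H)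
    have e4 : frob G * frob G = Sq G := frob_mul_self G
    have hfG : 0 ≤ frob G := frob_nonneg G
    calc Sq (G * Hᵀ) = ip (G * (Hᵀ * H)) G := e1
      _ ≤ frob (G * (Hᵀ * H)) * frob G := e2
      _ ≤ (frob G * c) * frob G := by nlinarith
      _ = c * Sq G := by rw [← e4]; ring
  rw [Sq_expand, h1]
  have hSG : 0 ≤ Sq G := Sq_nonneg G
  nlinarith [h2, hlc, hlam0, mul_nonneg hlam0 hSG, sq_nonneg lam]
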